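/- arXiv:1210.2190 — 3 statements merged into one kernel-verified Lean document; each statement's English description precedes it below -/
import Mathlib

section
/- Let u : ℝⁿ → ℝ be a convex function such that u(x) − |x|²/2 is periodic with fundamental domain P = [−1/2, 1/2]ⁿ, and suppose ∫_{[−3,3]ⁿ} u² dx ≤ C₁. Then there is a constant C₀ depending only on C₁ and n such that sup_{x ∈ P} |u(x)| ≤ C₀. -/
open MeasureTheory Pointwise

/-- Key estimate: the integral of `u (x + c • t)` over the small cube is bounded by the
integral of `|u|` over the big cube, provided the affine image lands in the big cube. -/
lemma aux_setIntegral_comp_affine {n : ℕ} {u : (Fin n → ℝ) → ℝ} (hu : Continuous u)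
    (x : Fin n → ℝ) {c : ℝ} (hc : 1 ≤ |c|)
    (hsub : ∀ t ∈ Set.Icc (fun _ => (-(1:ℝ)/2)) (fun _ => (1:ℝ)/2),
      x + c • t ∈ Set.Icc (fun _ => (-3:ℝ)) (fun _ => (3:ℝ))) :
    |∫ t in Set.Icc (fun _ => (-(1:ℝ)/2)) (fun _ => (1:ℝ)/2), u (x + c • t)|
      ≤ ∫ y in Set.Icc (fun _ => (-3:ℝ)) (fun _ => (3:ℝ)), |u y| := by
  set P : Set (Fin n → ℝ) := Set.Icc (fun _ => (-(1:ℝ)/2)) (fun _ => (1:ℝ)/2) with hP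
  set Q : Set (Fin n → ℝ) := Set.Icc (fun _ => (-3:ℝ)) (fun _ => (3:ℝ)) with hQ
  have hc0 : c ≠ 0 := by intro h; rw [h] at hc; simp at hc; linarith
  have hQc : IsCompact Q := isCompact_Icc
  have hIuQ : IntegrableOn (fun y => |u y|) Q := hu.abs.continuousOn.integrableOn_compact hQc
  have h1 : |∫ t in P, u (x + c • t)| ≤ ∫ t in P, |u (x + c • t)| := by
    simpa [Real.norm_eq_abs] using
      norm_integral_le_integral_norm (μ := volume.restrict P) (fun t => u (x + c • t))
  have h2 : ∫ t in P, |u (x + c • t)| = |(c ^ n)⁻¹| * ∫ y in c • P, |u (x + y)| := by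
    have := Measure.setIntegral_comp_smul (volume : Measure (Fin n → ℝ))
      (fun y => |u (x + y)|) P hc0
    simpa [Module.finrank_fin_fun, smul_eq_mul] using this
  have h3 : ∫ y in c • P, |u (x + y)| = ∫ z in (fun y => x + y) '' (c • P), |u z| := by
    exact ((measurePreserving_add_left (volume : Measure (Fin n → ℝ)) x).setIntegral_image_emb
      (MeasurableEquiv.addLeft x).measurableEmbedding (fun z => |u z|) (c • P)).symm
  have h4 : (fun y => x + y) '' (c • P) ⊆ Q := by
    rintro z ⟨y, ⟨t, ht, rfl⟩, rfl⟩
    exact hsub t ht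
  have h5 : ∫ z in (fun y => x + y) '' (c • P), |u z| ≤ ∫ z in Q, |u z| := by
    apply setIntegral_mono_set hIuQ
    · exact Filter.Eventually.of_forall fun z => abs_nonneg _
    · exact HasSubset.Subset.eventuallyLE h4
  have h6 : (0:ℝ) ≤ ∫ y in c • P, |u (x + y)| :=
    integral_nonneg fun y => abs_nonneg _
  have h7 : |(c ^ n)⁻¹| ≤ 1 := by
    rw [abs_inv, abs_pow]
    exact inv_le_one_of_one_le₀ (one_le_pow₀ hc)
  calc |∫ t in P, u (x + c • t)| ≤ ∫ t in P, |u (x + c • t)| := h1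
    _ = |(c ^ n)⁻¹| * ∫ y in c • P, |u (x + y)| := h2
    _ ≤ 1 * ∫ y in c • P, |u (x + y)| := by nlinarith
    _ = ∫ z in (fun y => x + y) '' (c • P), |u z| := by rw [one_mul, h3]
    _ ≤ ∫ z in Q, |u z| := h5

theorem sup_bound_of_L2_bound_periodic
    (n : ℕ) (C₁ : ℝ) :
    ∃ C₀ : ℝ, ∀ u : (Fin n → ℝ) → ℝ,
      ConvexOn ℝ Set.univ u →
      (∀ (m : Fin n → ℤ) (x : Fin n → ℝ),
        u (x + fun i => (m i : ℝ)) - (∑ i, (x i + (m i : ℝ)) ^ 2) / 2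
          = u x - (∑ i, (x i) ^ 2) / 2) →
      (∫ x in Set.Icc (fun _ => (-3 : ℝ)) (fun _ => 3), (u x) ^ 2) ≤ C₁ →
      ∀ x ∈ Set.Icc (fun _ => (-(1:ℝ)/2)) (fun _ => (1:ℝ)/2), |u x| ≤ C₀ := by
  refine ⟨3 * ((C₁ + 6 ^ n) / 2), ?_⟩
  intro u hconv _hper hL2 x hx
  set P : Set (Fin n → ℝ) := Set.Icc (fun _ => (-(1:ℝ)/2)) (fun _ => (1:ℝ)/2) with hPdef
  set Q : Set (Fin n → ℝ) := Set.Icc (fun _ => (-3:ℝ)) (fun _ => (3:ℝ)) with hQdef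
  have hu : Continuous u := by
    have h := hconv.locallyLipschitz
    exact h.continuous
  have hQc : IsCompact Q := isCompact_Icc
  have hPc : IsCompact P := isCompact_Icc
  have hIuQ : IntegrableOn (fun y => |u y|) Q := hu.abs.continuousOn.integrableOn_compact hQc
  have hvolP : ((volume : Measure (Fin n → ℝ)) P).toReal = 1 := by
    rw [hPdef, Real.volume_Icc_pi_toReal (fun i => by norm_num)]
    norm_num
  set K : ℝ := (C₁ + 6 ^ n) / 2 with hKdef
  -- L¹ bound from L² bound
  have hKbound : ∫ y in Q, |u y| ≤ K := by
    have h1 : ∫ y in Q, |u y| ≤ ∫ y in Q, (u y ^ 2 + 1) / 2 := by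
      apply setIntegral_mono_on hIuQ ?_ measurableSet_Icc ?_
      · exact (((hu.pow 2).add continuous_const).div_const 2).continuousOn.integrableOn_compact hQc
      · intro y _; nlinarith [sq_nonneg (|u y| - 1), sq_abs (u y)]
    have h2 : ∫ y in Q, (u y ^ 2 + 1) / 2
        = ((∫ y in Q, u y ^ 2) + (volume Q).toReal) / 2 := by
      rw [integral_div, integral_add ((hu.pow 2).continuousOn.integrableOn_compact hQc : Integrable (fun y => u y ^ 2) (volume.restrict Q))
        (integrableOn_const (μ := volume) (C := (1:ℝ)) hQc.measure_lt_top.ne : Integrable (fun _ => (1:ℝ)) (volume.restrict Q))]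
      simp [setIntegral_const, measureReal_def]
    have h3 : ((volume : Measure (Fin n → ℝ)) Q).toReal = 6 ^ n := by
      rw [hQdef, Real.volume_Icc_pi_toReal (fun i => by norm_num)]
      norm_num
    rw [h2, h3] at h1
    have := hL2
    calc ∫ y in Q, |u y| ≤ ((∫ y in Q, u y ^ 2) + 6 ^ n) / 2 := h1
      _ ≤ (C₁ + 6 ^ n) / 2 := by
          have : (∫ y in Q, u y ^ 2) ≤ C₁ := hL2
          linarith
      _ = K := rfl
  have hK0 : (0:ℝ) ≤ K :=
    le_trans (setIntegral_nonneg measurableSet_Icc fun y _ => abs_nonneg _) hKbound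
  -- membership of affine images
  have hmem : ∀ c : ℝ, |c| ≤ 2 → ∀ t ∈ P, x + c • t ∈ Q := by
    intro c hc t ht
    rw [hPdef, Set.mem_Icc] at hx ht
    rw [hQdef, Set.mem_Icc]
    have hc' := abs_le.mp hc
    constructor <;> intro i <;>
    · have h1 := hx.1 i; have h2 := hx.2 i; have h3 := ht.1 i; have h4 := ht.2 i
      simp only [Pi.add_apply, Pi.smul_apply, smul_eq_mul] at *
      have h5 : |c * t i| ≤ 1 := by
        rw [abs_mul]
        calc |c| * |t i| ≤ 2 * (1/2) := by
              apply mul_le_mul hc (abs_le.mpr ⟨by linarith, by linarith⟩) (abs_nonneg _)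
              norm_num
          _ = 1 := by norm_num
      have h6 := abs_le.mp h5
      linarith [h6.1, h6.2]
  -- key integral bounds
  have key : ∀ c : ℝ, 1 ≤ |c| → |c| ≤ 2 → |∫ t in P, u (x + c • t)| ≤ K := by
    intro c h1 h2
    exact le_trans (aux_setIntegral_comp_affine hu x h1 (hmem c h2)) hKbound
  have hI1 := key 1 (by norm_num) (by norm_num)
  have hI2 := key (-1) (by norm_num) (by norm_num)
  have hI3 := key 2 (by norm_num) (by norm_num)
  have hic : ∀ c : ℝ, IntegrableOn (fun t => u (x + c • t)) P volume := by
    intro c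
    exact ((hu.comp (continuous_const.add (continuous_id.const_smul c))).continuousOn).integrableOn_compact hPc
  -- upper bound
  have hptu : ∀ t ∈ P, 2 * u x ≤ u (x + (1:ℝ) • t) + u (x + (-1:ℝ) • t) := by
    intro t _
    have h := hconv.2 (Set.mem_univ (x + t)) (Set.mem_univ (x - t))
      (by norm_num : (0:ℝ) ≤ 1/2) (by norm_num : (0:ℝ) ≤ 1/2) (by norm_num)
    have e : (1/2 : ℝ) • (x + t) + (1/2 : ℝ) • (x - t) = x := by module
    rw [e] at h
    have e1 : x + (1:ℝ) • t = x + t := by module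
    have e2 : x + (-1:ℝ) • t = x - t := by module
    rw [e1, e2]
    simp only [smul_eq_mul] at h
    linarith
  have hup : 2 * u x ≤ (∫ t in P, u (x + (1:ℝ) • t)) + ∫ t in P, u (x + (-1:ℝ) • t) := by
    have h := setIntegral_mono_on (integrableOn_const hPc.measure_lt_top.ne)
      ((hic 1).add (hic (-1))) measurableSet_Icc hptu
    rw [setIntegral_const, measureReal_def, hvolP, one_smul] at h
    simp only [Pi.add_apply] at h
    rwa [integral_add (hic 1) (hic (-1))] at h
  -- lower bound
  have hptl : ∀ t ∈ P, 2 * u (x + (1:ℝ) • t) - u (x + (2:ℝ) • t) ≤ u x := by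
    intro t _
    have h := hconv.2 (Set.mem_univ x) (Set.mem_univ (x + (2:ℝ) • t))
      (by norm_num : (0:ℝ) ≤ 1/2) (by norm_num : (0:ℝ) ≤ 1/2) (by norm_num)
    have e : (1/2 : ℝ) • x + (1/2 : ℝ) • (x + (2:ℝ) • t) = x + (1:ℝ) • t := by module
    rw [e] at h
    simp only [smul_eq_mul] at h
    linarith
  have hlow : 2 * (∫ t in P, u (x + (1:ℝ) • t)) - (∫ t in P, u (x + (2:ℝ) • t)) ≤ u x := by
    have h := setIntegral_mono_on (((hic 1).const_mul 2).sub (hic 2))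
      (integrableOn_const hPc.measure_lt_top.ne) measurableSet_Icc hptl
    rw [setIntegral_const, measureReal_def, hvolP, one_smul] at h
    simp only [Pi.sub_apply] at h
    rwa [integral_sub ((hic 1).const_mul 2) (hic 2), integral_const_mul] at h
  have a1 := abs_le.mp hI1
  have a2 := abs_le.mp hI2
  have a3 := abs_le.mp hI3
  rw [abs_le]
  constructor
  · -- lower: u x ≥ -3K
    have : -3 * K ≤ u x := by linarith [a1.1, a3.2]
    linarith
  · -- upper: u x ≤ K ≤ 3K
    have : u x ≤ K := by linarith [a1.2, a2.2]
    linarith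
end

section
/- Let u : ℝⁿ → ℝ be convex with |u(x)| ≤ C₀ for all x ∈ [−2,2]ⁿ. Suppose u attains its maximum over [−2,2]ⁿ at a vertex v of the cube. Then for any supporting affine function ℓ of u at v, the set of points x ∈ [−3,3]ⁿ where ℓ(x) ≥ ℓ(v) has Lebesgue measure at least 1. -/
open MeasureTheory

theorem supporting_plane_superlevel_measure
    (n : ℕ) (C₀ : ℝ) (u : (Fin n → ℝ) → ℝ)
    (hconv : ConvexOn ℝ Set.univ u)
    (hbd : ∀ x ∈ Set.Icc (fun _ => (-2 : ℝ)) (fun _ => 2), |u x| ≤ C₀)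
    (v : Fin n → ℝ) (hv : v ∈ Set.Icc (fun _ => (-2 : ℝ)) (fun _ => 2))
    (hvert : ∀ i, v i = -2 ∨ v i = 2)
    (hmax : ∀ x ∈ Set.Icc (fun _ => (-2 : ℝ)) (fun _ => 2), u x ≤ u v)
    (ℓ : (Fin n → ℝ) → ℝ) (a : Fin n → ℝ)
    (hℓ : ∀ x, ℓ x = u v + ∑ i, a i * (x i - v i))
    (hsupp : ∀ x, ℓ x ≤ u x) :
    1 ≤ volume {x ∈ Set.Icc (fun _ => (-3 : ℝ)) (fun _ => 3) | ℓ v ≤ ℓ x} := by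
  classical
  have hℓv : ℓ v = u v := by simp [hℓ]
  -- sign information on a i
  have key : ∀ i, ∀ t ∈ Set.Icc (-2:ℝ) 2, a i * (t - v i) ≤ 0 := by
    intro i t ht
    set y := Function.update v i t with hy
    have hycube : y ∈ Set.Icc (fun _ => (-2 : ℝ)) (fun _ => 2) := by
      constructor <;> intro j <;> rcases eq_or_ne j i with rfl | hj
      · simpa [hy, Function.update] using ht.1
      · simpa [hy, Function.update, hj] using hv.1 j
      · simpa [hy, Function.update] using ht.2
      · simpa [hy, Function.update, hj] using hv.2 j
    have h1 : ℓ y ≤ u v := le_trans (hsupp y) (hmax y hycube)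
    have h2 : ℓ y = u v + a i * (t - v i) := by
      rw [hℓ]
      congr 1
      rw [Finset.sum_eq_single i]
      · simp [hy, Function.update]
      · intro j _ hj; simp [hy, Function.update, hj]
      · simp
    linarith
  set lo : Fin n → ℝ := fun i => if v i = 2 then 2 else -3 with hlo
  set hi : Fin n → ℝ := fun i => lo i + 1 with hhi
  have hsub : Set.Icc lo hi ⊆
      {x ∈ Set.Icc (fun _ => (-3 : ℝ)) (fun _ => 3) | ℓ v ≤ ℓ x} := by
    intro x hx
    have hterm : ∀ i, 0 ≤ a i * (x i - v i) ∧ -3 ≤ x i ∧ x i ≤ 3 := by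
      intro i
      have hx1 := hx.1 i
      have hx2 := hx.2 i
      rcases hvert i with h2 | h2
      · -- v i = -2, lo i = -3, x i ∈ [-3,-2]
        have hne : v i ≠ 2 := by rw [h2]; norm_num
        simp only [hlo, hhi, hne, if_false, if_neg] at hx1 hx2
        norm_num at hx1 hx2
        have ha : a i ≤ 0 := by
          have := key i 2 (by norm_num)
          rw [h2] at this; nlinarith
        refine ⟨?_, by linarith, by linarith⟩
        have : x i - v i ≤ 0 := by rw [h2]; linarith
        nlinarith
      · -- v i = 2, lo i = 2, x i ∈ [2,3]
        simp only [hlo, hhi, h2, if_pos] at hx1 hx2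
        have ha : 0 ≤ a i := by
          have := key i (-2) (by norm_num)
          rw [h2] at this; nlinarith
        refine ⟨?_, by linarith, by linarith⟩
        have : 0 ≤ x i - v i := by rw [h2]; linarith
        exact mul_nonneg ha this
    refine ⟨⟨fun i => (hterm i).2.1, fun i => (hterm i).2.2⟩, ?_⟩
    rw [hℓv, hℓ]
    have : (0:ℝ) ≤ ∑ i, a i * (x i - v i) :=
      Finset.sum_nonneg fun i _ => (hterm i).1
    linarith
  have hvol : volume (Set.Icc lo hi) = 1 := by
    rw [Real.volume_Icc_pi]
    simp [hhi]
  calc (1 : ENNReal) = volume (Set.Icc lo hi) := hvol.symm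
    _ ≤ _ := measure_mono hsub
end

section
/- Suppose F : ℝⁿ → ℝ≥0 is a family of functions Fᵏ (k ≥ 0) on a bounded domain P satisfying: (i) Fᵏ ≤ C(k) in L²(P), (ii) the Euclidean gradient satisfies |∇Fᵏ| ≤ c⁻¹ F^{k+1} pointwise for a uniform c > 0, and (iii) F⁰ ≤ 1 pointwise. Then by iterating the Sobolev embedding W^{1,2} ↪ L^q (q = 2n/(n−2) for n > 2, q = 4 for n = 2) finitely many times, each Fᵏ is bounded in L^∞(P) by a constant depending only on k, n, c and the constants C(j). -/
open MeasureTheory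
open scoped ENNReal

def cubeP (n : ℕ) : Set (Fin n → ℝ) := Set.Icc (fun _ => -(1:ℝ)/2) (fun _ => (1:ℝ)/2)

namespace SobolevBootstrapAux

open Function Set Finset ENNReal

noncomputable def nu : Measure ℝ := volume.restrict (Set.Icc (-(1:ℝ)/2) (1/2))

instance : IsProbabilityMeasure nu := ⟨by
  rw [nu, Measure.restrict_apply_univ, Real.volume_Icc]
  norm_num⟩

lemma cubeP_eq (n : ℕ) :
    cubeP n = Set.pi Set.univ (fun _ : Fin n => Set.Icc (-(1:ℝ)/2) ((1:ℝ)/2)) := by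
  rw [Set.pi_univ_Icc]; rfl

lemma pi_nu (n : ℕ) :
    Measure.pi (fun _ : Fin n => nu) = volume.restrict (cubeP n) := by
  refine Measure.pi_eq fun s hs => ?_
  rw [cubeP_eq, Measure.restrict_apply (MeasurableSet.univ_pi hs), ← Set.pi_inter_distrib,
    volume_pi_pi]
  simp only [nu, Measure.restrict_apply (hs _)]

lemma update_updateFinset_comm {n : ℕ} (x : Fin n → ℝ) (s : Finset (Fin n))
    (y : ∀ j : s, ℝ) (i : Fin n) (hi : i ∉ s) (t : ℝ) :
    Function.update (updateFinset x s y) i t = updateFinset (Function.update x i t) s y := by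
  funext j
  rcases eq_or_ne j i with rfl | hj
  · simp [updateFinset, hi]
  · by_cases hjs : j ∈ s <;> simp [updateFinset, hjs, Function.update_of_ne hj]

lemma updateFinset_apply_not_mem {n : ℕ} (x : Fin n → ℝ) (s : Finset (Fin n))
    (y : ∀ j : s, ℝ) (i : Fin n) (hi : i ∉ s) :
    updateFinset x s y i = x i := by
  simp [updateFinset, hi]

section Main

variable {n : ℕ} {c : ℝ} {F : ℕ → (Fin n → ℝ) → ℝ}

/-- The `ℝ≥0∞`-valued version of `F`. -/
noncomputable def g (F : ℕ → (Fin n → ℝ) → ℝ) (m : ℕ) : (Fin n → ℝ) → ℝ≥0∞ :=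
  fun x => ENNReal.ofReal (F m x)

lemma g_meas (hF : ∀ k, ContDiff ℝ 1 (F k)) (m : ℕ) : Measurable (g F m) :=
  ((hF m).continuous.measurable).ennreal_ofReal

/-- Pointwise FTC bound in one coordinate. -/
lemma ptwise (hc : 0 < c) (hF : ∀ k, ContDiff ℝ 1 (F k))
    (hFnn : ∀ k x, 0 ≤ F k x)
    (hgrad : ∀ k x, ‖fderiv ℝ (F k) x‖ ≤ c⁻¹ * F (k + 1) x)
    (m : ℕ) (i : Fin n) (y : Fin n → ℝ) (hy : y i ∈ Set.Icc (-(1:ℝ)/2) ((1:ℝ)/2))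
    (t : ℝ) (ht : t ∈ Set.Icc (-(1:ℝ)/2) ((1:ℝ)/2)) :
    F m y ≤ F m (Function.update y i t)
      + c⁻¹ * ∫ u in Set.Icc (-(1:ℝ)/2) ((1:ℝ)/2), F (m+1) (Function.update y i u) := by
  set h : ℝ → ℝ := fun u => F m (Function.update y i u) with hh
  set d : ℝ → ℝ := fun u => fderiv ℝ (F m) (Function.update y i u) (Pi.single i 1) with hd
  have hupd : Continuous (fun u : ℝ => Function.update y i u) :=
    continuous_const.update i continuous_id
  have hderiv : ∀ u : ℝ, HasDerivAt h (d u) u := by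
    intro u
    exact (((hF m).differentiable one_ne_zero) _).hasFDerivAt.comp_hasDerivAt u
      (hasDerivAt_update y i u)
  have hcont_d : Continuous d := by
    have h1 : Continuous (fderiv ℝ (F m)) := (hF m).continuous_fderiv one_ne_zero
    exact (h1.comp hupd).clm_apply continuous_const
  have hsingle : ‖(Pi.single i (1:ℝ) : Fin n → ℝ)‖ ≤ 1 := by
    rw [Pi.norm_single]
    simp
  have hdb : ∀ u : ℝ, |d u| ≤ c⁻¹ * F (m+1) (Function.update y i u) := by
    intro u
    have h1 : |d u| ≤ ‖fderiv ℝ (F m) (Function.update y i u)‖ * ‖(Pi.single i (1:ℝ) : Fin n → ℝ)‖ :=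
      (fderiv ℝ (F m) (Function.update y i u)).le_opNorm _
    have h2 : ‖fderiv ℝ (F m) (Function.update y i u)‖ * ‖(Pi.single i (1:ℝ) : Fin n → ℝ)‖
        ≤ ‖fderiv ℝ (F m) (Function.update y i u)‖ * 1 :=
      mul_le_mul_of_nonneg_left hsingle (norm_nonneg _)
    refine h1.trans (h2.trans ?_)
    rw [mul_one]
    exact hgrad m _
  have hFcont : Continuous (fun u : ℝ => F (m+1) (Function.update y i u)) :=
    (hF (m+1)).continuous.comp hupd
  have hsub : Set.uIoc t (y i) ⊆ Set.Icc (-(1:ℝ)/2) ((1:ℝ)/2) := by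
    refine Set.Ioc_subset_Icc_self.trans (Set.Icc_subset_Icc ?_ ?_)
    · exact le_min ht.1 hy.1
    · exact max_le ht.2 hy.2
  have key : h (y i) - h t ≤ c⁻¹ * ∫ u in Set.Icc (-(1:ℝ)/2) ((1:ℝ)/2),
      F (m+1) (Function.update y i u) := by
    have heq : h (y i) - h t = ∫ u in t..(y i), d u :=
      (intervalIntegral.integral_eq_sub_of_hasDerivAt (fun u _ => hderiv u)
        (hcont_d.intervalIntegrable _ _)).symm
    have h1 : h (y i) - h t ≤ |∫ u in t..(y i), d u| := by
      rw [heq]; exact le_abs_self _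
    have h2 : |∫ u in t..(y i), d u| ≤ ∫ u in Set.uIoc t (y i), |d u| := by
      rw [← Real.norm_eq_abs]
      refine le_trans intervalIntegral.norm_integral_le_integral_norm_uIoc (le_of_eq ?_)
      simp [Real.norm_eq_abs]
    have h3 : ∫ u in Set.uIoc t (y i), |d u|
        ≤ ∫ u in Set.uIoc t (y i), c⁻¹ * F (m+1) (Function.update y i u) := by
      refine setIntegral_mono ?_ ?_ hdb
      · exact (hcont_d.abs.integrableOn_Icc (a := -(1:ℝ)/2) (b := (1:ℝ)/2)).mono_set hsub
      · exact ((hFcont.const_smul c⁻¹).integrableOn_Icc (a := -(1:ℝ)/2) (b := (1:ℝ)/2)).mono_set hsub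
    have h4 : ∫ u in Set.uIoc t (y i), c⁻¹ * F (m+1) (Function.update y i u)
        ≤ ∫ u in Set.Icc (-(1:ℝ)/2) ((1:ℝ)/2), c⁻¹ * F (m+1) (Function.update y i u) := by
      refine setIntegral_mono_set
        ((hFcont.const_smul c⁻¹).integrableOn_Icc (a := -(1:ℝ)/2) (b := (1:ℝ)/2))
        (Filter.Eventually.of_forall fun u => mul_nonneg (inv_nonneg.2 hc.le) (hFnn _ _))
        (HasSubset.Subset.eventuallyLE hsub)
    have h5 : ∫ u in Set.Icc (-(1:ℝ)/2) ((1:ℝ)/2), c⁻¹ * F (m+1) (Function.update y i u)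
        = c⁻¹ * ∫ u in Set.Icc (-(1:ℝ)/2) ((1:ℝ)/2), F (m+1) (Function.update y i u) :=
      integral_const_mul _ _
    linarith [h1.trans (h2.trans (h3.trans h4))]
  have hyy : h (y i) = F m y := by rw [hh]; simp
  have hht : h t = F m (Function.update y i t) := rfl
  linarith [key]

/-- Pointwise FTC bound, `ℝ≥0∞` version. -/
lemma ptwiseE (hc : 0 < c) (hF : ∀ k, ContDiff ℝ 1 (F k))
    (hFnn : ∀ k x, 0 ≤ F k x)
    (hgrad : ∀ k x, ‖fderiv ℝ (F k) x‖ ≤ c⁻¹ * F (k + 1) x)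
    (m : ℕ) (i : Fin n) (y : Fin n → ℝ) (hy : y i ∈ Set.Icc (-(1:ℝ)/2) ((1:ℝ)/2))
    (t : ℝ) (ht : t ∈ Set.Icc (-(1:ℝ)/2) ((1:ℝ)/2)) :
    g F m y ≤ g F m (Function.update y i t)
      + ENNReal.ofReal c⁻¹ * ∫⁻ u, g F (m+1) (Function.update y i u) ∂nu := by
  have hupd : Continuous (fun u : ℝ => Function.update y i u) :=
    continuous_const.update i continuous_id
  have hint : Integrable (fun u => F (m+1) (Function.update y i u)) nu := by
    rw [nu]
    exact ((hF (m+1)).continuous.comp hupd).integrableOn_Icc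
  have hlint : ENNReal.ofReal (∫ u in Set.Icc (-(1:ℝ)/2) ((1:ℝ)/2), F (m+1) (Function.update y i u))
      = ∫⁻ u, g F (m+1) (Function.update y i u) ∂nu := by
    rw [show (∫ u in Set.Icc (-(1:ℝ)/2) ((1:ℝ)/2), F (m+1) (Function.update y i u))
        = ∫ u, F (m+1) (Function.update y i u) ∂nu from rfl]
    exact ofReal_integral_eq_lintegral_ofReal hint
      (Filter.Eventually.of_forall fun u => hFnn _ _)
  calc g F m y ≤ ENNReal.ofReal (F m (Function.update y i t)
        + c⁻¹ * ∫ u in Set.Icc (-(1:ℝ)/2) ((1:ℝ)/2), F (m+1) (Function.update y i u)) :=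
      ENNReal.ofReal_le_ofReal (ptwise hc hF hFnn hgrad m i y hy t ht)
    _ ≤ g F m (Function.update y i t) + ENNReal.ofReal
        (c⁻¹ * ∫ u in Set.Icc (-(1:ℝ)/2) ((1:ℝ)/2), F (m+1) (Function.update y i u)) :=
      ENNReal.ofReal_add_le
    _ = g F m (Function.update y i t)
        + ENNReal.ofReal c⁻¹ * ∫⁻ u, g F (m+1) (Function.update y i u) ∂nu := by
      rw [ENNReal.ofReal_mul (inv_nonneg.2 hc.le), hlint]

/-- The marginal-level step. -/
lemma step (hc : 0 < c) (hF : ∀ k, ContDiff ℝ 1 (F k))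
    (hFnn : ∀ k x, 0 ≤ F k x)
    (hgrad : ∀ k x, ‖fderiv ℝ (F k) x‖ ≤ c⁻¹ * F (k + 1) x)
    (m : ℕ) (i : Fin n) (s : Finset (Fin n)) (hi : i ∉ s)
    (x : Fin n → ℝ) (hx : x ∈ cubeP n) :
    (∫⋯∫⁻_s, g F m ∂fun _ => nu) x
      ≤ (∫⋯∫⁻_insert i s, g F m ∂fun _ => nu) x
        + ENNReal.ofReal c⁻¹ * (∫⋯∫⁻_insert i s, g F (m+1) ∂fun _ => nu) x := by
  have hxi : x i ∈ Set.Icc (-(1:ℝ)/2) ((1:ℝ)/2) := ⟨hx.1 i, hx.2 i⟩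
  have hgm := g_meas hF m
  have hgm1 := g_meas hF (m+1)
  -- Sub-step A
  have A : ∀ t ∈ Set.Icc (-(1:ℝ)/2) ((1:ℝ)/2),
      (∫⋯∫⁻_s, g F m ∂fun _ => nu) x
        ≤ (∫⋯∫⁻_s, g F m ∂fun _ => nu) (Function.update x i t)
          + ENNReal.ofReal c⁻¹ * (∫⋯∫⁻_insert i s, g F (m+1) ∂fun _ => nu) x := by
    intro t ht
    have hpt : ∀ y : ∀ j : s, ℝ,
        g F m (updateFinset x s y)
          ≤ g F m (updateFinset (Function.update x i t) s y)
            + ENNReal.ofReal c⁻¹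
              * (∫⋯∫⁻_{i}, g F (m+1) ∂fun _ => nu) (updateFinset x s y) := by
      intro y
      have hz : updateFinset x s y i = x i := updateFinset_apply_not_mem x s y i hi
      have := ptwiseE hc hF hFnn hgrad m i (updateFinset x s y) (hz ▸ hxi) t ht
      rw [update_updateFinset_comm x s y i hi t] at this
      rw [lmarginal_singleton]
      exact this
    have hmeas1 : Measurable fun y : ∀ j : s, ℝ =>
        g F m (updateFinset (Function.update x i t) s y) :=
      hgm.comp measurable_updateFinset
    have hmeas2 : Measurable fun y : ∀ j : s, ℝ =>
        (∫⋯∫⁻_{i}, g F (m+1) ∂fun _ => nu) (updateFinset x s y) :=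
      (hgm1.lmarginal _).comp measurable_updateFinset
    calc (∫⋯∫⁻_s, g F m ∂fun _ => nu) x
        = ∫⁻ y, g F m (updateFinset x s y) ∂(Measure.pi fun _ : s => nu) := rfl
      _ ≤ ∫⁻ y, (g F m (updateFinset (Function.update x i t) s y)
            + ENNReal.ofReal c⁻¹
              * (∫⋯∫⁻_{i}, g F (m+1) ∂fun _ => nu) (updateFinset x s y))
            ∂(Measure.pi fun _ : s => nu) := lintegral_mono fun y => hpt y
      _ = (∫⋯∫⁻_s, g F m ∂fun _ => nu) (Function.update x i t)
            + ENNReal.ofReal c⁻¹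
              * (∫⋯∫⁻_s, (∫⋯∫⁻_{i}, g F (m+1) ∂fun _ => nu) ∂fun _ => nu) x := by
          rw [lintegral_add_left hmeas1, lintegral_const_mul _ hmeas2]
          rfl
      _ = (∫⋯∫⁻_s, g F m ∂fun _ => nu) (Function.update x i t)
            + ENNReal.ofReal c⁻¹ * (∫⋯∫⁻_insert i s, g F (m+1) ∂fun _ => nu) x := by
          rw [← lmarginal_union (fun _ => nu) (g F (m+1)) hgm1
            (Finset.disjoint_singleton_right.mpr hi)]
          rw [show s ∪ {i} = insert i s by rw [Finset.union_comm, ← Finset.insert_eq]]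
  -- Sub-step B : integrate over t
  have hmeasB : Measurable fun t : ℝ =>
      (∫⋯∫⁻_s, g F m ∂fun _ => nu) (Function.update x i t) :=
    (hgm.lmarginal _).comp (measurable_update x)
  calc (∫⋯∫⁻_s, g F m ∂fun _ => nu) x
      = ∫⁻ _, (∫⋯∫⁻_s, g F m ∂fun _ => nu) x ∂nu := by
        rw [lintegral_const, measure_univ, mul_one]
    _ ≤ ∫⁻ t, ((∫⋯∫⁻_s, g F m ∂fun _ => nu) (Function.update x i t)
          + ENNReal.ofReal c⁻¹ * (∫⋯∫⁻_insert i s, g F (m+1) ∂fun _ => nu) x) ∂nu := by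
        refine lintegral_mono_ae ?_
        have : ∀ᵐ t ∂nu, t ∈ Set.Icc (-(1:ℝ)/2) ((1:ℝ)/2) :=
          ae_restrict_mem measurableSet_Icc
        exact this.mono fun t ht => A t ht
    _ = (∫⋯∫⁻_insert i s, g F m ∂fun _ => nu) x
          + ENNReal.ofReal c⁻¹ * (∫⋯∫⁻_insert i s, g F (m+1) ∂fun _ => nu) x := by
        rw [lintegral_add_right _ measurable_const, lintegral_const, measure_univ, mul_one]
        simp only [lmarginal_insert _ hgm hi x]

/-- Main downward induction. -/
lemma main (hc : 0 < c) (hF : ∀ k, ContDiff ℝ 1 (F k))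
    (hFnn : ∀ k x, 0 ≤ F k x)
    (hgrad : ∀ k x, ‖fderiv ℝ (F k) x‖ ≤ c⁻¹ * F (k + 1) x)
    (d : ℕ) :
    ∀ s : Finset (Fin n), n ≤ s.card + d → ∀ m : ℕ, ∀ x ∈ cubeP n,
      (∫⋯∫⁻_s, g F m ∂fun _ => nu) x
        ≤ (1 + ENNReal.ofReal c⁻¹) ^ d
            * ∑ j ∈ Finset.range (d+1), (∫⋯∫⁻_Finset.univ, g F (m+j) ∂fun _ => nu) x := by
  induction d with
  | zero =>
    intro s hs m x hx
    have hcard : s = Finset.univ := by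
      apply Finset.eq_univ_of_card
      have := Finset.card_le_univ s
      simp only [Fintype.card_fin] at *
      omega
    subst hcard
    simp
  | succ d ih =>
    intro s hs m x hx
    by_cases hsu : s = Finset.univ
    · subst hsu
      have h0 : (∫⋯∫⁻_Finset.univ, g F (m+0) ∂fun _ => nu) x
          ≤ ∑ j ∈ Finset.range (d+2), (∫⋯∫⁻_Finset.univ, g F (m+j) ∂fun _ => nu) x :=
        Finset.single_le_sum (f := fun j => (∫⋯∫⁻_Finset.univ, g F (m+j) ∂fun _ => nu) x)
          (fun j _ => zero_le) (Finset.mem_range.mpr (by omega))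
      have h1 : (1:ℝ≥0∞) ≤ (1 + ENNReal.ofReal c⁻¹) ^ (d+1) :=
        one_le_pow_of_one_le' le_self_add _
      calc (∫⋯∫⁻_Finset.univ, g F m ∂fun _ => nu) x
          = (∫⋯∫⁻_Finset.univ, g F (m+0) ∂fun _ => nu) x := rfl
        _ ≤ ∑ j ∈ Finset.range (d+2), (∫⋯∫⁻_Finset.univ, g F (m+j) ∂fun _ => nu) x := h0
        _ ≤ (1 + ENNReal.ofReal c⁻¹) ^ (d+1)
              * ∑ j ∈ Finset.range (d+2), (∫⋯∫⁻_Finset.univ, g F (m+j) ∂fun _ => nu) x :=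
            le_mul_of_one_le_left zero_le h1
    · obtain ⟨i, hi⟩ : ∃ i, i ∉ s := by
        by_contra hcon
        push_neg at hcon
        exact hsu (Finset.eq_univ_iff_forall.mpr hcon)
      have hcard : n ≤ (insert i s).card + d := by
        rw [Finset.card_insert_of_notMem hi]
        omega
      have ih1 := ih (insert i s) hcard m x hx
      have ih2 := ih (insert i s) hcard (m+1) x hx
      have hsum1 : ∑ j ∈ Finset.range (d+1), (∫⋯∫⁻_Finset.univ, g F (m+j) ∂fun _ => nu) x
          ≤ ∑ j ∈ Finset.range (d+2), (∫⋯∫⁻_Finset.univ, g F (m+j) ∂fun _ => nu) x :=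
        Finset.sum_le_sum_of_subset (Finset.range_subset_range.mpr (by omega))
      have hsum2 : ∑ j ∈ Finset.range (d+1), (∫⋯∫⁻_Finset.univ, g F (m+1+j) ∂fun _ => nu) x
          ≤ ∑ j ∈ Finset.range (d+2), (∫⋯∫⁻_Finset.univ, g F (m+j) ∂fun _ => nu) x := by
        rw [Finset.sum_range_succ' (fun j => (∫⋯∫⁻_Finset.univ, g F (m+j) ∂fun _ => nu) x) (d+1)]
        refine le_trans (le_of_eq (Finset.sum_congr rfl fun j _ => ?_)) le_self_add
        rw [show m+1+j = m+(j+1) by omega]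
      calc (∫⋯∫⁻_s, g F m ∂fun _ => nu) x
          ≤ (∫⋯∫⁻_insert i s, g F m ∂fun _ => nu) x
              + ENNReal.ofReal c⁻¹ * (∫⋯∫⁻_insert i s, g F (m+1) ∂fun _ => nu) x :=
            step hc hF hFnn hgrad m i s hi x hx
        _ ≤ (1 + ENNReal.ofReal c⁻¹) ^ d
              * ∑ j ∈ Finset.range (d+1), (∫⋯∫⁻_Finset.univ, g F (m+j) ∂fun _ => nu) x
            + ENNReal.ofReal c⁻¹ * ((1 + ENNReal.ofReal c⁻¹) ^ d
              * ∑ j ∈ Finset.range (d+1), (∫⋯∫⁻_Finset.univ, g F (m+1+j) ∂fun _ => nu) x) :=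
            add_le_add ih1 (mul_le_mul_right ih2 _)
        _ ≤ (1 + ENNReal.ofReal c⁻¹) ^ d
              * ∑ j ∈ Finset.range (d+2), (∫⋯∫⁻_Finset.univ, g F (m+j) ∂fun _ => nu) x
            + ENNReal.ofReal c⁻¹ * ((1 + ENNReal.ofReal c⁻¹) ^ d
              * ∑ j ∈ Finset.range (d+2), (∫⋯∫⁻_Finset.univ, g F (m+j) ∂fun _ => nu) x) :=
            add_le_add (mul_le_mul_right hsum1 _)
              (mul_le_mul_right (mul_le_mul_right hsum2 _) _)
        _ = (1 + ENNReal.ofReal c⁻¹) ^ (d+1)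
              * ∑ j ∈ Finset.range (d+2), (∫⋯∫⁻_Finset.univ, g F (m+j) ∂fun _ => nu) x := by
            ring

end Main

end SobolevBootstrapAux

theorem sobolev_bootstrap_Linfty_bound
    (n : ℕ) (c : ℝ) (hc : 0 < c) (C : ℕ → ℝ) :
    ∃ B : ℕ → ℝ, ∀ F : ℕ → (Fin n → ℝ) → ℝ,
      (∀ k, ContDiff ℝ 1 (F k)) →
      (∀ k x, 0 ≤ F k x) →
      (∀ k, (∫ x in cubeP n, (F k x) ^ 2) ≤ C k) →
      (∀ k x, ‖fderiv ℝ (F k) x‖ ≤ c⁻¹ * F (k + 1) x) →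
      (∀ x, F 0 x ≤ 1) →
      ∀ k, ∀ x ∈ cubeP n, F k x ≤ B k := by
  classical
  open SobolevBootstrapAux in
  refine ⟨fun k => (1 + c⁻¹) ^ n
    * ∑ j ∈ Finset.range (n+1), Real.sqrt (max (C (k+j)) 0), ?_⟩
  intro F hF hFnn hL2 hgrad _ k x hx
  -- full-cube integral bound via Cauchy-Schwarz
  have hKuniv : ∀ m : ℕ,
      (∫⋯∫⁻_Finset.univ, SobolevBootstrapAux.g F m ∂fun _ : Fin n => nu) x
        ≤ ENNReal.ofReal (Real.sqrt (max (C m) 0)) := by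
    intro m
    rw [lmarginal_univ]
    have hmeas := SobolevBootstrapAux.g_meas hF m
    have hCS : ∫⁻ z, SobolevBootstrapAux.g F m z ∂(Measure.pi fun _ : Fin n => nu)
        ≤ (∫⁻ z, (SobolevBootstrapAux.g F m z) ^ (2:ℝ) ∂(Measure.pi fun _ : Fin n => nu)) ^ ((1:ℝ)/2)
          * (∫⁻ z, (1:ℝ≥0∞) ^ (2:ℝ) ∂(Measure.pi fun _ : Fin n => nu)) ^ ((1:ℝ)/2) := by
      have := ENNReal.lintegral_mul_le_Lp_mul_Lq (Measure.pi fun _ : Fin n => nu)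
        Real.HolderConjugate.two_two hmeas.aemeasurable
        aemeasurable_const (f := SobolevBootstrapAux.g F m) (g := fun _ => (1:ℝ≥0∞))
      simpa using this
    have hone : (∫⁻ _, (1:ℝ≥0∞) ^ (2:ℝ) ∂(Measure.pi fun _ : Fin n => nu)) ^ ((1:ℝ)/2) = 1 := by
      haveI : IsProbabilityMeasure (Measure.pi fun _ : Fin n => nu) := by infer_instance
      simp
    have hsq : ∫⁻ z, (SobolevBootstrapAux.g F m z) ^ (2:ℝ) ∂(Measure.pi fun _ : Fin n => nu)
        ≤ ENNReal.ofReal (max (C m) 0) := by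
      rw [pi_nu]
      have hint : IntegrableOn (fun z => (F m z) ^ 2) (cubeP n) volume := by
        apply ContinuousOn.integrableOn_compact
        · exact isCompact_Icc
        · exact ((hF m).continuous.pow 2).continuousOn
      have heq : ∫⁻ z in cubeP n, (SobolevBootstrapAux.g F m z) ^ (2:ℝ) ∂volume
          = ENNReal.ofReal (∫ z in cubeP n, (F m z) ^ 2) := by
        rw [ofReal_integral_eq_lintegral_ofReal hint
          (Filter.Eventually.of_forall fun z => sq_nonneg _)]
        apply lintegral_congr
        intro z
        simp only [SobolevBootstrapAux.g]
        rw [show (2:ℝ) = ((2:ℕ):ℝ) by norm_num, ENNReal.rpow_natCast,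
          ← ENNReal.ofReal_pow (hFnn m z)]
      rw [heq]
      exact ENNReal.ofReal_le_ofReal ((hL2 m).trans (le_max_left _ _))
    calc ∫⁻ z, SobolevBootstrapAux.g F m z ∂(Measure.pi fun _ : Fin n => nu)
        ≤ (∫⁻ z, (SobolevBootstrapAux.g F m z) ^ (2:ℝ) ∂(Measure.pi fun _ : Fin n => nu)) ^ ((1:ℝ)/2)
          * (∫⁻ z, (1:ℝ≥0∞) ^ (2:ℝ) ∂(Measure.pi fun _ : Fin n => nu)) ^ ((1:ℝ)/2) := hCS
      _ = (∫⁻ z, (SobolevBootstrapAux.g F m z) ^ (2:ℝ) ∂(Measure.pi fun _ : Fin n => nu)) ^ ((1:ℝ)/2) := by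
          rw [hone, mul_one]
      _ ≤ (ENNReal.ofReal (max (C m) 0)) ^ ((1:ℝ)/2) := by
          exact ENNReal.rpow_le_rpow hsq (by norm_num)
      _ = ENNReal.ofReal (Real.sqrt (max (C m) 0)) := by
          rw [ENNReal.ofReal_rpow_of_nonneg (le_max_right _ _) (by norm_num : (0:ℝ) ≤ 1/2),
            Real.sqrt_eq_rpow]
  have hmain := SobolevBootstrapAux.main hc hF hFnn hgrad n ∅ (by simp) k x hx
  rw [lmarginal_empty] at hmain
  have hchain : SobolevBootstrapAux.g F k x ≤ ENNReal.ofReal ((1 + c⁻¹) ^ n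
      * ∑ j ∈ Finset.range (n+1), Real.sqrt (max (C (k+j)) 0)) := by
    have h1 : (1 + ENNReal.ofReal c⁻¹) ^ n
        * ∑ j ∈ Finset.range (n+1),
            (∫⋯∫⁻_Finset.univ, SobolevBootstrapAux.g F (k+j) ∂fun _ : Fin n => nu) x
        ≤ (1 + ENNReal.ofReal c⁻¹) ^ n
          * ∑ j ∈ Finset.range (n+1), ENNReal.ofReal (Real.sqrt (max (C (k+j)) 0)) :=
      mul_le_mul_right (Finset.sum_le_sum fun j _ => hKuniv (k+j)) _
    have h2 : (1 + ENNReal.ofReal c⁻¹) ^ n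
          * ∑ j ∈ Finset.range (n+1), ENNReal.ofReal (Real.sqrt (max (C (k+j)) 0))
        = ENNReal.ofReal ((1 + c⁻¹) ^ n
          * ∑ j ∈ Finset.range (n+1), Real.sqrt (max (C (k+j)) 0)) := by
      rw [ENNReal.ofReal_mul (by positivity), ENNReal.ofReal_pow (by positivity),
        ENNReal.ofReal_add zero_le_one (inv_nonneg.2 hc.le), ENNReal.ofReal_one,
        ENNReal.ofReal_sum_of_nonneg (fun j _ => Real.sqrt_nonneg _)]
    exact hmain.trans (h1.trans_eq h2)
  have hB : (0:ℝ) ≤ (1 + c⁻¹) ^ n * ∑ j ∈ Finset.range (n+1), Real.sqrt (max (C (k+j)) 0) := by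
    positivity
  exact (ENNReal.ofReal_le_ofReal_iff hB).mp hchain
end
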